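/- Let q be an even power of an odd prime and write s = √q, so that q = s². If s ≡ 1 (mod 4), then the independence number of the Erdős–Rényi polarity graph satisfies α(ER_q) ≥ (q^{3/2} + q)/2 + q + 1, i.e. α(ER_q) ≥ (s³ + 3s²)/2 + 1. -/

import Mathlib

open Projectivization

/-- Two points of `PG(2,q)` are conjugate with respect to the orthogonal polarity of the
conic `X₂² - X₁X₃ = 0` if the bilinear form `p₃q₁ - 2p₂q₂ + p₁q₃` vanishes (this is
independent of the chosen representatives). -/
def ConjOdd {F : Type} [Field F] (P Q : Projectivization F (Fin 3 → F)) : Prop :=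
  P.rep 2 * Q.rep 0 - 2 * P.rep 1 * Q.rep 1 + P.rep 0 * Q.rep 2 = 0

/-- The Erdős–Rényi polarity graph `ER_q`: vertices are the points of `PG(2,q)`, two
distinct points being adjacent when they are conjugate. -/
def ER (F : Type) [Field F] : SimpleGraph (Projectivization F (Fin 3 → F)) where
  Adj P Q := P ≠ Q ∧ ConjOdd P Q
  symm := by
    constructor
    rintro P Q ⟨h1, h2⟩
    exact ⟨h1.symm, by unfold ConjOdd at *; linear_combination h2⟩
  loopless := ⟨fun P h => h.1 rfl⟩

/-- The conjugacy relation computed on arbitrary representatives. -/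
lemma conjOdd_iff_aux {F : Type} [Field F] (v w : Fin 3 → F) (hv : v ≠ 0) (hw : w ≠ 0) :
    ConjOdd (Projectivization.mk F v hv) (Projectivization.mk F w hw) ↔
      v 2 * w 0 - 2 * v 1 * w 1 + v 0 * w 2 = 0 := by
  obtain ⟨a, ha⟩ := Projectivization.exists_smul_eq_mk_rep F v hv
  obtain ⟨b, hb⟩ := Projectivization.exists_smul_eq_mk_rep F w hw
  unfold ConjOdd
  rw [← ha, ← hb]
  simp only [Units.smul_def, Pi.smul_apply, smul_eq_mul]
  constructor
  · intro h
    have h2 : (a : F) * b * (v 2 * w 0 - 2 * v 1 * w 1 + v 0 * w 2) = 0 := by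
      linear_combination h
    rcases mul_eq_zero.mp h2 with h3 | h3
    · exact absurd h3 (mul_ne_zero a.ne_zero b.ne_zero)
    · exact h3
  · intro h
    linear_combination (a : F) * (b : F) * h

lemma vec3_ne_zero_of_fst {F : Type} [Field F] (a b c : F) (h : a ≠ 0) :
    (![a, b, c] : Fin 3 → F) ≠ 0 := fun hh => h (by simpa using congrFun hh 0)

lemma vec3_ne_zero_of_last {F : Type} [Field F] (a b c : F) (h : c ≠ 0) :
    (![a, b, c] : Fin 3 → F) ≠ 0 := fun hh => h (by simpa using congrFun hh 2)

/-- If `q = s²` is an even power of an odd prime with `s = √q ≡ 1 (mod 4)`, then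
`α(ER_q) ≥ (q^{3/2} + q)/2 + q + 1 = (s³ + 3s²)/2 + 1`. -/
theorem alpha_ER_ge_of_sqrt_one_mod_four
    (p k s : ℕ) (hp : p.Prime) (hpodd : Odd p) (hk : 0 < k) (hs : s = p ^ k)
    (hmod : s % 4 = 1)
    (F : Type) [Field F] [Fintype F] (hF : Fintype.card F = s ^ 2) :
    ∃ S : Set (Projectivization F (Fin 3 → F)),
      (∀ P ∈ S, ∀ Q ∈ S, ¬ (ER F).Adj P Q) ∧
      (s ^ 3 + 3 * s ^ 2) / 2 + 1 ≤ S.ncard := by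
  classical
  haveI : Fact p.Prime := ⟨hp⟩
  -- basic arithmetic on p, s
  have hp2 : 2 < p := by
    have h2 := hp.two_le
    rcases hpodd with ⟨c, hc⟩
    omega
  haveI : Fact (2 < p) := ⟨hp2⟩
  have hs3 : 3 ≤ s := by
    have h1 : p ≤ p ^ k := Nat.le_self_pow (by omega) p
    omega
  obtain ⟨t, ht⟩ : ∃ t, s = 4 * t + 1 := ⟨s / 4, by omega⟩
  have ht1 : 1 ≤ t := by omega
  set m := 2 * t + 1 with hm_def
  set M := 4 * t * m with hM_def
  have hM0 : M ≠ 0 := by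
    rw [hM_def, hm_def]
    positivity
  have hqM : s ^ 2 = 2 * M + 1 := by rw [hM_def, hm_def, ht]; ring
  have hMeven : Even M := ⟨2 * t * m, by rw [hM_def]; ring⟩
  -- characteristic of F is p
  have hrp : ringChar F = p := by
    obtain ⟨n, hn, hcard⟩ := FiniteField.card F (ringChar F)
    have h1 : ringChar F ∣ p ^ (k * 2) := by
      have h2 : ringChar F ∣ ringChar F ^ (n : ℕ) := dvd_pow_self _ n.2.ne'
      rwa [← hcard, hF, hs, ← pow_mul] at h2
    exact (Nat.prime_dvd_prime_iff_eq hn hp).1 (hn.dvd_of_dvd_pow h1)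
  haveI hchar : CharP F p := hrp ▸ ringChar.charP F
  have hneg1 : (-1 : F) ≠ 1 := CharP.neg_one_ne_one F p
  have hneg0 : (-1 : F) ≠ 0 := neg_ne_zero.mpr one_ne_zero
  have frob : ∀ x y : F, (x + y) ^ s = x ^ s + y ^ s := by
    intro x y
    rw [hs]
    exact add_pow_char_pow x y p k
  -- generator of the unit group
  obtain ⟨g, hg⟩ := IsCyclic.exists_generator (α := Fˣ)
  have horder : orderOf g = 2 * M := by
    rw [orderOf_eq_card_of_forall_mem_zpowers hg, Nat.card_units,
      Nat.card_eq_fintype_card, hF]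
    omega
  set gF : F := (g : F) with hgF_def
  have hgF0 : gF ≠ 0 := g.ne_zero
  -- χ(g) = -1
  have hg_chi : gF ^ M = -1 := by
    have hx2 : (gF ^ M) ^ 2 = 1 := by
      rw [← pow_mul]
      have hu : (g ^ (M * 2) : Fˣ) = 1 := by
        rw [show M * 2 = 2 * M by ring, ← horder]
        exact pow_orderOf_eq_one g
      calc gF ^ (M * 2) = ((g ^ (M * 2) : Fˣ) : F) := by push_cast; rfl
        _ = 1 := by rw [hu]; rfl
    have hx1 : gF ^ M ≠ 1 := by
      intro h
      have hu : (g ^ M : Fˣ) = 1 := Units.ext (by push_cast; exact h)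
      have hdvd : orderOf g ∣ M := orderOf_dvd_of_pow_eq_one hu
      rw [horder] at hdvd
      have := Nat.le_of_dvd (by omega) hdvd
      omega
    have h3 : (gF ^ M - 1) * (gF ^ M + 1) = 0 := by linear_combination hx2
    rcases mul_eq_zero.mp h3 with h4 | h4
    · exact absurd (by linear_combination h4) hx1
    · linear_combination h4
  -- element of order m
  set ζ : Fˣ := g ^ (8 * t) with hζ_def
  have hζm : ζ ^ m = 1 := by
    rw [hζ_def, ← pow_mul, show 8 * t * m = 2 * M by rw [hM_def]; ring,
      ← horder, pow_orderOf_eq_one]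
  have hζord : orderOf ζ = m := by
    rw [hζ_def, orderOf_pow, horder]
    have hdvd : (8 * t) ∣ (2 * M) := ⟨m, by rw [hM_def]; ring⟩
    rw [Nat.gcd_eq_right hdvd, show 2 * M = (8 * t) * m by rw [hM_def]; ring,
      Nat.mul_div_cancel_left _ (by omega : 0 < 8 * t)]
  set ζF : F := (ζ : F) with hζF_def
  have hζF0 : ζF ≠ 0 := ζ.ne_zero
  have hζFm : ζF ^ m = 1 := by
    calc ζF ^ m = ((ζ ^ m : Fˣ) : F) := by push_cast; rfl
      _ = 1 := by rw [hζm]; rfl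
  -- χ of powers of ζ is 1
  have chi_zpow : ∀ i : ℕ, (ζF ^ i) ^ M = 1 := by
    intro i
    rw [← pow_mul, show i * M = m * (4 * t * i) by rw [hM_def]; ring, pow_mul, hζFm, one_pow]
  -- χ(1 + η) = 1 for η an m-th root of unity
  have chi_one_add : ∀ η : F, η ^ m = 1 → (1 + η) ^ M = 1 := by
    intro η hη
    have hη0 : η ≠ 0 := by
      intro h0
      rw [h0, zero_pow (by rw [hm_def]; omega : m ≠ 0)] at hη
      exact zero_ne_one hη
    have hne : (1 : F) + η ≠ 0 := by
      intro h
      have hη1 : η = -1 := by linear_combination h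
      rw [hη1, Odd.neg_one_pow ⟨t, by rw [hm_def]⟩] at hη
      exact hneg1 hη
    have hs1 : η ^ (s + 1) = 1 := by
      rw [show s + 1 = m * 2 by rw [hm_def]; omega, pow_mul, hη, one_pow]
    have hfs : (1 + η) ^ s = 1 + η ^ s := by
      have := frob 1 η
      rwa [one_pow] at this
    have key : (1 + η) ^ (4 * t) * η = 1 := by
      apply mul_right_cancel₀ (mul_ne_zero hne hη0)
      calc ((1 + η) ^ (4 * t) * η) * ((1 + η) * η)
          = (1 + η) ^ (4 * t + 1) * η ^ 2 := by ring
        _ = (1 + η) ^ s * η ^ 2 := by rw [← ht]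
        _ = (1 + η ^ s) * η ^ 2 := by rw [hfs]
        _ = η ^ 2 + η ^ (s + 1) * η := by ring
        _ = η ^ 2 + η := by rw [hs1, one_mul]
        _ = 1 * ((1 + η) * η) := by ring
    have h5 : ((1 + η) ^ (4 * t) * η) ^ m = 1 := by rw [key, one_pow]
    rw [mul_pow, ← pow_mul, hη, mul_one] at h5
    rw [hM_def]
    exact h5
  -- the translation set `W`
  set W : Option (Fin m) → F := fun j => j.elim 0 (fun i => gF * ζF ^ (i : ℕ)) with hW_def
  have hW_none : W none = 0 := rfl
  have hW_some : ∀ i : Fin m, W (some i) = gF * ζF ^ (i : ℕ) := fun _ => rfl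
  -- χ of a single element of the translation set
  have chi_single : ∀ i : Fin m, (gF * ζF ^ (i : ℕ)) ^ M = -1 := by
    intro i
    rw [mul_pow, hg_chi, chi_zpow, mul_one]
  -- χ of sums
  have chi_pair : ∀ i i' : Fin m,
      (gF * ζF ^ (i : ℕ) + gF * ζF ^ (i' : ℕ)) ^ M = -1 := by
    intro i i'
    set η : F := ((ζ ^ (i' : ℕ) * (ζ ^ (i : ℕ))⁻¹ : Fˣ) : F) with hη_def
    have hηm : η ^ m = 1 := by
      have hu : ((ζ ^ (i' : ℕ) * (ζ ^ (i : ℕ))⁻¹ : Fˣ)) ^ m = 1 := by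
        have e1 : (ζ ^ (i' : ℕ)) ^ m = 1 := by
          rw [← pow_mul, mul_comm, pow_mul, hζm, one_pow]
        have e2 : (ζ ^ (i : ℕ)) ^ m = 1 := by
          rw [← pow_mul, mul_comm, pow_mul, hζm, one_pow]
        rw [mul_pow, inv_pow, e1, e2, inv_one, mul_one]
      calc η ^ m = (((ζ ^ (i' : ℕ) * (ζ ^ (i : ℕ))⁻¹ : Fˣ) ^ m : Fˣ) : F) := by
            rw [hη_def]; push_cast; rfl
        _ = 1 := by rw [hu]; rfl
    have hsum : gF * ζF ^ (i : ℕ) + gF * ζF ^ (i' : ℕ) = gF * ζF ^ (i : ℕ) * (1 + η) := by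
      have hηv : ζF ^ (i : ℕ) * η = ζF ^ (i' : ℕ) := by
        rw [hη_def, hζF_def]
        push_cast
        field_simp
      calc gF * ζF ^ (i : ℕ) + gF * ζF ^ (i' : ℕ)
          = gF * ζF ^ (i : ℕ) + gF * (ζF ^ (i : ℕ) * η) := by rw [hηv]
        _ = gF * ζF ^ (i : ℕ) * (1 + η) := by ring
    rw [hsum, mul_pow, mul_pow, hg_chi, chi_zpow, chi_one_add η hηm, mul_one, mul_one]
  have chi_W : ∀ j j' : Option (Fin m), (j = none → j' = none → False) →
      (W j + W j') ^ M = -1 := by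
    intro j j' hnn
    match j, j' with
    | none, none => exact absurd rfl (fun h => hnn h rfl)
    | none, some i => rw [hW_none, hW_some, zero_add]; exact chi_single i
    | some i, none => rw [hW_none, hW_some, add_zero]; exact chi_single i
    | some i, some i' => rw [hW_some, hW_some]; exact chi_pair i i'
  -- the point set
  have hpt : ∀ (y : F) (j : Option (Fin m)), (![1, y, y ^ 2 + W j] : Fin 3 → F) ≠ 0 :=
    fun y j => vec3_ne_zero_of_fst _ _ _ one_ne_zero
  set f : F × Option (Fin m) → Projectivization F (Fin 3 → F) :=
    fun x => Projectivization.mk F ![1, x.1, x.1 ^ 2 + W x.2] (hpt x.1 x.2) with hf_def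
  have hinf : (![0, 0, 1] : Fin 3 → F) ≠ 0 := vec3_ne_zero_of_last _ _ _ one_ne_zero
  set Pinf : Projectivization F (Fin 3 → F) := Projectivization.mk F ![0, 0, 1] hinf
    with hPinf_def
  refine ⟨insert Pinf (Set.range f), ?_, ?_⟩
  · -- independence
    intro P hP Q hQ hAdj
    obtain ⟨hne, hconj⟩ := hAdj
    rcases hP with hP | ⟨⟨b, j⟩, rfl⟩
    · rcases hQ with hQ | ⟨⟨y, j'⟩, rfl⟩
      · exact hne (hP.trans hQ.symm)
      · rw [hP, hPinf_def, hf_def] at hconj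
        rw [conjOdd_iff_aux] at hconj
        simp only [Matrix.cons_val_zero, Matrix.cons_val_one, Matrix.head_cons,
          Matrix.cons_val_two, Matrix.tail_cons] at hconj
        have : (1 : F) = 0 := by linear_combination hconj
        exact one_ne_zero this
    · rcases hQ with hQ | ⟨⟨y, j'⟩, rfl⟩
      · rw [hQ, hPinf_def, hf_def] at hconj
        rw [conjOdd_iff_aux] at hconj
        simp only [Matrix.cons_val_zero, Matrix.cons_val_one, Matrix.head_cons,
          Matrix.cons_val_two, Matrix.tail_cons] at hconj
        have : (1 : F) = 0 := by linear_combination hconj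
        exact one_ne_zero this
      · rw [hf_def] at hconj
        rw [conjOdd_iff_aux] at hconj
        simp only [Matrix.cons_val_zero, Matrix.cons_val_one, Matrix.head_cons,
          Matrix.cons_val_two, Matrix.tail_cons] at hconj
        -- hconj : (b^2 + W j) * 1 - 2*b*y + 1*(y^2 + W j') = 0
        by_cases hj : j = none ∧ j' = none
        · obtain ⟨hj1, hj2⟩ := hj
          rw [hj1, hj2, hW_none] at hconj
          have hby : (b - y) ^ 2 = 0 := by linear_combination hconj
          have hby2 : b = y := by
            have := (pow_eq_zero_iff (by norm_num : (2 : ℕ) ≠ 0)).mp hby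
            linear_combination this
          apply hne
          rw [hf_def, hj1, hj2, hby2]
        · have hkey : (W j + W j') ^ M = -1 := by
            apply chi_W
            intro h1 h2
            exact hj ⟨h1, h2⟩
          have heq : W j + W j' = -((b - y) ^ 2) := by linear_combination hconj
          have hby : b - y ≠ 0 := by
            intro h0
            rw [heq, h0] at hkey
            rw [show -((0 : F) ^ 2) = 0 by ring, zero_pow hM0] at hkey
            exact hneg0 hkey.symm
          have : (-1 : F) = 1 := by
            calc (-1 : F) = (W j + W j') ^ M := hkey.symm
              _ = (-((b - y) ^ 2)) ^ M := by rw [heq]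
              _ = ((b - y) ^ 2) ^ M := hMeven.neg_pow _
              _ = (b - y) ^ (2 * M) := by rw [← pow_mul]
              _ = (b - y) ^ (Fintype.card F - 1) := by
                  congr 1
                  rw [hF]
                  omega
              _ = 1 := FiniteField.pow_card_sub_one_eq_one _ hby
          exact hneg1 this
  · -- cardinality
    have hWinj : Function.Injective W := by
      intro j j' hjj
      match j, j' with
      | none, none => rfl
      | none, some i =>
        rw [hW_none, hW_some] at hjj
        exact absurd hjj.symm (mul_ne_zero hgF0 (pow_ne_zero _ hζF0))
      | some i, none =>
        rw [hW_none, hW_some] at hjj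
        exact absurd hjj (mul_ne_zero hgF0 (pow_ne_zero _ hζF0))
      | some i, some i' =>
        rw [hW_some, hW_some] at hjj
        have h1 : ζF ^ (i : ℕ) = ζF ^ (i' : ℕ) := mul_left_cancel₀ hgF0 hjj
        have h2 : (ζ ^ (i : ℕ) : Fˣ) = ζ ^ (i' : ℕ) := by
          apply Units.ext
          push_cast
          exact h1
        have h3 : (i : ℕ) = (i' : ℕ) := by
          apply pow_injOn_Iio_orderOf ?_ ?_ h2
          · rw [Set.mem_Iio, hζord]; exact i.isLt
          · rw [Set.mem_Iio, hζord]; exact i'.isLt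
        rw [Fin.ext h3]
    have hfinj : Function.Injective f := by
      rintro ⟨y, j⟩ ⟨y', j'⟩ hfe
      rw [hf_def] at hfe
      simp only at hfe
      rw [Projectivization.mk_eq_mk_iff] at hfe
      obtain ⟨a, ha⟩ := hfe
      have h0 : (a : F) * 1 = 1 := by
        have := congrFun ha 0
        simpa [Units.smul_def] using this
      have ha1 : (a : F) = 1 := by rwa [mul_one] at h0
      have h1 : y' = y := by
        have := congrFun ha 1
        simp only [Units.smul_def, Pi.smul_apply, smul_eq_mul, Matrix.cons_val_one,
          Matrix.head_cons, ha1, one_mul] at this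
        exact this
      have h2 : y' ^ 2 + W j' = y ^ 2 + W j := by
        have := congrFun ha 2
        simp only [Units.smul_def, Pi.smul_apply, smul_eq_mul, Matrix.cons_val_two,
          Matrix.tail_cons, Matrix.head_cons, ha1, one_mul] at this
        exact this
      rw [h1] at h2
      have h3 : W j' = W j := by linear_combination h2
      have h4 : j' = j := hWinj h3
      rw [h1, h4]
    have hPim : Pinf ∉ Set.range f := by
      rintro ⟨⟨y, j⟩, hyj⟩
      rw [hf_def, hPinf_def] at hyj
      simp only at hyj
      rw [Projectivization.mk_eq_mk_iff] at hyj
      obtain ⟨a, ha⟩ := hyj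
      have h0 := congrFun ha 0
      simp only [Units.smul_def, Pi.smul_apply, smul_eq_mul, Matrix.cons_val_zero,
        mul_zero] at h0
      exact one_ne_zero h0.symm
    rw [Set.ncard_insert_of_notMem hPim (Set.finite_range f)]
    have hr : (Set.range f).ncard = s ^ 2 * (m + 1) := by
      rw [← Set.image_univ, Set.ncard_image_of_injective _ hfinj, Set.ncard_univ,
        Nat.card_eq_fintype_card, Fintype.card_prod, Fintype.card_option, Fintype.card_fin, hF]
    rw [hr]
    have harith : s ^ 3 + 3 * s ^ 2 = s ^ 2 * (m + 1) * 2 := by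
      rw [hm_def, ht]; ring
    omega
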